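/- (Splitting a rooted spanning tree at a cut node.) Let G be a connected multidigraph containing a node * such that removing * and its incident edges decomposes the remaining graph into two disjoint parts G_{H1} and G_{H2} with no edges between H1 and H2. Let N be a node of H1 ∪ {*}. Then the map (τ_1, τ_2) ↦ τ_1 ∪ τ_2 is a bijection between pairs consisting of a spanning tree τ_1 of G_{H1} (the subgraph induced by H1 ∪ {*}) rooted at N and a spanning tree τ_2 of G_{H2} (induced by H2 ∪ {*}) rooted at *, and the set of spanning trees of G rooted at N. Moreover π(τ_1 ∪ τ_2) = π(τ_1)π(τ_2) for any labeling π. -/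

import Mathlib

/-- A multidigraph: a set of nodes `V`, a set of edges `E`, and source/target maps. -/
structure Multidigraph (V E : Type*) where
  src : E → V
  tgt : E → V

namespace Multidigraph

variable {V E : Type*}

/-- One-step edge relation using only the edges in `τ`. -/
def Rel (G : Multidigraph V E) (τ : Set E) (a b : V) : Prop :=
  ∃ e ∈ τ, G.src e = a ∧ G.tgt e = b

/-- Undirected (symmetrized) one-step relation. -/
def URel (G : Multidigraph V E) (a b : V) : Prop :=
  G.Rel Set.univ a b ∨ G.Rel Set.univ b a

/-- Node set of the (weakly) connected component containing `v`. -/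
def component (G : Multidigraph V E) (v : V) : Set V :=
  {w | Relation.ReflTransGen G.URel v w}

/-- `τ` is a spanning tree of the subgraph of `G` induced on the node set `W`,
rooted at `r`: all edges stay inside `W`, every non-root node of `W` has exactly
one outgoing edge in `τ`, the root has none, and every node of `W` reaches `r`
through `τ`. -/
def IsSpanningTreeOn (G : Multidigraph V E) (W : Set V) (τ : Finset E) (r : V) : Prop :=
  (∀ e ∈ τ, G.src e ∈ W ∧ G.tgt e ∈ W) ∧
  (∀ v ∈ W, v ≠ r → ∃! e, e ∈ τ ∧ G.src e = v) ∧
  (∀ e ∈ τ, G.src e ≠ r) ∧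
  (∀ v ∈ W, Relation.ReflTransGen (G.Rel (τ : Set E)) v r)

/-- Spanning tree of `G` rooted at `r`. -/
def IsSpanningTree (G : Multidigraph V E) (τ : Finset E) (r : V) : Prop :=
  G.IsSpanningTreeOn Set.univ τ r

/-- A cycle: a nonempty closed directed path with pairwise distinct nodes. -/
def IsCycle (G : Multidigraph V E) (l : List E) : Prop :=
  l ≠ [] ∧ (l.map G.src).Nodup ∧
  l.Chain' (fun a b => G.tgt a = G.src b) ∧
  ∀ h : l ≠ [], G.tgt (l.getLast h) = G.src (l.head h)

def StronglyConnected (G : Multidigraph V E) : Prop :=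
  ∀ a b : V, Relation.ReflTransGen (G.Rel Set.univ) a b

def Connected (G : Multidigraph V E) : Prop :=
  ∀ a b : V, Relation.ReflTransGen G.URel a b

/-- Incidence matrix of a multidigraph. -/
def incidence [DecidableEq V] (G : Multidigraph V E) : Matrix V E ℝ := fun v e =>
  if G.tgt e = v ∧ G.src e ≠ v then 1
  else if G.src e = v ∧ G.tgt e ≠ v then (-1 : ℝ) else 0

end Multidigraph

private lemma reach_transfer {V E : Type} (G : Multidigraph V E) {τ τ' : Set E}
    {S : Set V} {N : V}
    (h : ∀ a b, a ∈ S → G.Rel τ a b → G.Rel τ' a b ∧ b ∈ S) :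
    ∀ {v}, v ∈ S → Relation.ReflTransGen (G.Rel τ) v N →
      Relation.ReflTransGen (G.Rel τ') v N := by
  intro v hv hr
  revert hv
  induction hr using Relation.ReflTransGen.head_induction_on with
  | refl => exact fun _ => .refl
  | head hab _ ih =>
      intro hv
      obtain ⟨h1, h2⟩ := h _ _ hv hab
      exact .head h1 (ih h2)

private lemma closed_reach {V E : Type} (G : Multidigraph V E) {τ : Set E} {S : Set V}
    (h : ∀ a b, a ∈ S → G.Rel τ a b → b ∈ S) {a b : V}
    (ha : a ∈ S) (hr : Relation.ReflTransGen (G.Rel τ) a b) : b ∈ S := by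
  induction hr with
  | refl => exact ha
  | tail _ hbc ih => exact h _ _ ih hbc

private lemma reach_exit {V E : Type} (G : Multidigraph V E) {τ τ' : Set E}
    {H : Set V} {N star : V} (hN : N ∉ H)
    (h : ∀ e ∈ τ, G.src e ∈ H → e ∈ τ' ∧ (G.tgt e ∈ H ∨ G.tgt e = star)) :
    ∀ {v}, v ∈ H → Relation.ReflTransGen (G.Rel τ) v N →
      Relation.ReflTransGen (G.Rel τ') v star := by
  intro v hv hr
  revert hv
  induction hr using Relation.ReflTransGen.head_induction_on with
  | refl => exact fun hv => absurd hv hN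
  | head hab _ ih =>
      intro hv
      obtain ⟨e, he, hs, ht⟩ := hab
      obtain ⟨he', hcase⟩ := h e he (hs ▸ hv)
      rcases hcase with h2 | h2
      · exact .head ⟨e, he', hs, ht⟩ (ih (ht ▸ h2))
      · exact .single ⟨e, he', hs, h2⟩

/-- Splitting a rooted spanning tree at a cut node: the map
`(τ₁, τ₂) ↦ τ₁ ∪ τ₂` is a bijection between pairs of a spanning tree of
`G_{H1}` rooted at `N` and a spanning tree of `G_{H2}` rooted at `*`, and the
spanning trees of `G` rooted at `N`; moreover labels multiply. -/
theorem stmt13 {V E : Type} [DecidableEq E] (G : Multidigraph V E)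
    (hconn : G.Connected)
    (star : V) (H1 H2 : Set V)
    (hdisj : Disjoint H1 H2) (hstar1 : star ∉ H1) (hstar2 : star ∉ H2)
    (hcover : H1 ∪ H2 ∪ {star} = Set.univ)
    (hsep : ∀ e : E, ¬ (G.src e ∈ H1 ∧ G.tgt e ∈ H2) ∧ ¬ (G.src e ∈ H2 ∧ G.tgt e ∈ H1))
    (N : V) (hN : N ∈ H1 ∪ {star})
    {R : Type} [CommMonoid R] (π : E → R) :
    Set.BijOn (fun q : Finset E × Finset E => q.1 ∪ q.2)
      {q | G.IsSpanningTreeOn (H1 ∪ {star}) q.1 N ∧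
            G.IsSpanningTreeOn (H2 ∪ {star}) q.2 star}
      {τ | G.IsSpanningTree τ N} ∧
    (∀ τ₁ τ₂ : Finset E, G.IsSpanningTreeOn (H1 ∪ {star}) τ₁ N →
      G.IsSpanningTreeOn (H2 ∪ {star}) τ₂ star →
      ∏ e ∈ τ₁ ∪ τ₂, π e = (∏ e ∈ τ₁, π e) * (∏ e ∈ τ₂, π e)) := by
  classical
  -- basic membership facts
  have hNH2 : N ∉ H2 := by
    rcases hN with hN1 | hN1
    · exact fun h => hdisj.ne_of_mem hN1 h rfl
    · rw [Set.mem_singleton_iff] at hN1; exact hN1 ▸ hstar2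
  have hcov : ∀ v : V, v ∈ H1 ∨ v ∈ H2 ∨ v = star := by
    intro v
    have : v ∈ H1 ∪ H2 ∪ {star} := hcover ▸ Set.mem_univ v
    rcases this with (h | h) | h
    · exact Or.inl h
    · exact Or.inr (Or.inl h)
    · exact Or.inr (Or.inr h)
  have hW1H2 : ∀ v : V, v ∈ H1 ∪ {star} → v ∉ H2 := by
    rintro v (hv | hv)
    · exact fun h => hdisj.ne_of_mem hv h rfl
    · rw [Set.mem_singleton_iff] at hv; exact hv ▸ hstar2
  -- sources of τ₂-edges are in H2
  have hsrc2 : ∀ (τ₂ : Finset E), G.IsSpanningTreeOn (H2 ∪ {star}) τ₂ star →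
      ∀ e ∈ τ₂, G.src e ∈ H2 := by
    intro τ₂ h2 e he
    rcases h2.1 e he with ⟨hs, _⟩
    rcases hs with hs | hs
    · exact hs
    · exact absurd (Set.mem_singleton_iff.mp hs) (h2.2.2.1 e he)
  -- disjointness of the two trees in a pair
  have hdisjtrees : ∀ (τ₁ τ₂ : Finset E), G.IsSpanningTreeOn (H1 ∪ {star}) τ₁ N →
      G.IsSpanningTreeOn (H2 ∪ {star}) τ₂ star → Disjoint τ₁ τ₂ := by
    intro τ₁ τ₂ h1 h2
    rw [Finset.disjoint_left]
    intro e he1 he2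
    exact hW1H2 _ (h1.1 e he1).1 (hsrc2 τ₂ h2 e he2)
  have hprod : ∀ τ₁ τ₂ : Finset E, G.IsSpanningTreeOn (H1 ∪ {star}) τ₁ N →
      G.IsSpanningTreeOn (H2 ∪ {star}) τ₂ star →
      ∏ e ∈ τ₁ ∪ τ₂, π e = (∏ e ∈ τ₁, π e) * (∏ e ∈ τ₂, π e) := by
    intro τ₁ τ₂ h1 h2
    exact Finset.prod_union (hdisjtrees τ₁ τ₂ h1 h2)
  refine ⟨⟨?_, ?_, ?_⟩, hprod⟩
  · -- MapsTo
    rintro ⟨τ₁, τ₂⟩ ⟨h1, h2⟩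
    obtain ⟨h1W, h1u, h1r, h1reach⟩ := h1
    obtain ⟨h2W, h2u, h2r, h2reach⟩ := h2
    have hs2 : ∀ e ∈ τ₂, G.src e ∈ H2 := hsrc2 τ₂ ⟨h2W, h2u, h2r, h2reach⟩
    have hmono1 : ∀ a b, G.Rel (τ₁ : Set E) a b → G.Rel ((τ₁ ∪ τ₂ : Finset E) : Set E) a b := by
      rintro a b ⟨e, he, h⟩
      exact ⟨e, by simp [Finset.mem_union, Finset.mem_coe.mp he], h⟩
    have hmono2 : ∀ a b, G.Rel (τ₂ : Set E) a b → G.Rel ((τ₁ ∪ τ₂ : Finset E) : Set E) a b := by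
      rintro a b ⟨e, he, h⟩
      exact ⟨e, by simp [Finset.mem_union, Finset.mem_coe.mp he], h⟩
    refine ⟨fun e _ => ⟨trivial, trivial⟩, ?_, ?_, ?_⟩
    · intro v _ hvN
      rcases hcov v with hv | hv | hv
      · obtain ⟨e, ⟨he, hse⟩, hu⟩ := h1u v (Or.inl hv) hvN
        refine ⟨e, ⟨Finset.mem_union_left _ he, hse⟩, ?_⟩
        rintro f ⟨hf, hsf⟩
        rcases Finset.mem_union.mp hf with hf | hf
        · exact hu f ⟨hf, hsf⟩
        · exact absurd (hsf ▸ hs2 f hf) (fun h => hdisj.ne_of_mem hv h rfl)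
      · have hvs : v ≠ star := fun h => hstar2 (h ▸ hv)
        obtain ⟨e, ⟨he, hse⟩, hu⟩ := h2u v (Or.inl hv) hvs
        refine ⟨e, ⟨Finset.mem_union_right _ he, hse⟩, ?_⟩
        rintro f ⟨hf, hsf⟩
        rcases Finset.mem_union.mp hf with hf | hf
        · exact absurd hv (hW1H2 _ (hsf ▸ (h1W f hf).1))
        · exact hu f ⟨hf, hsf⟩
      · subst hv
        obtain ⟨e, ⟨he, hse⟩, hu⟩ := h1u v (Or.inr rfl) hvN
        refine ⟨e, ⟨Finset.mem_union_left _ he, hse⟩, ?_⟩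
        rintro f ⟨hf, hsf⟩
        rcases Finset.mem_union.mp hf with hf | hf
        · exact hu f ⟨hf, hsf⟩
        · exact absurd (hsf ▸ hs2 f hf) hstar2
    · intro e he
      rcases Finset.mem_union.mp he with he | he
      · exact h1r e he
      · exact fun h => hNH2 (h ▸ hs2 e he)
    · intro v _
      rcases hcov v with hv | hv | hv
      · exact Relation.ReflTransGen.mono hmono1 _ _ (h1reach v (Or.inl hv))
      · exact (Relation.ReflTransGen.mono hmono2 _ _ (h2reach v (Or.inl hv))).trans
          (Relation.ReflTransGen.mono hmono1 _ _ (h1reach star (Or.inr rfl)))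
      · exact hv ▸ Relation.ReflTransGen.mono hmono1 _ _ (h1reach star (Or.inr rfl))
  · -- InjOn
    rintro ⟨τ₁, τ₂⟩ ⟨h1, h2⟩ ⟨σ₁, σ₂⟩ ⟨g1, g2⟩ hu
    simp only at hu
    have key : ∀ (a₁ a₂ b₁ b₂ : Finset E), G.IsSpanningTreeOn (H1 ∪ {star}) a₁ N →
        G.IsSpanningTreeOn (H2 ∪ {star}) a₂ star →
        G.IsSpanningTreeOn (H1 ∪ {star}) b₁ N →
        G.IsSpanningTreeOn (H2 ∪ {star}) b₂ star →
        a₁ ∪ a₂ = b₁ ∪ b₂ → a₁ ⊆ b₁ := by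
      intro a₁ a₂ b₁ b₂ ha1 ha2 hb1 hb2 h e he
      have : e ∈ b₁ ∪ b₂ := h ▸ Finset.mem_union_left _ he
      rcases Finset.mem_union.mp this with hf | hf
      · exact hf
      · exact absurd (hsrc2 b₂ hb2 e hf) (hW1H2 _ (ha1.1 e he).1)
    have e1 : τ₁ = σ₁ :=
      le_antisymm (key τ₁ τ₂ σ₁ σ₂ h1 h2 g1 g2 hu) (key σ₁ σ₂ τ₁ τ₂ g1 g2 h1 h2 hu.symm)
    have e2 : τ₂ = σ₂ := by
      have key2 : ∀ (a₁ a₂ b₁ b₂ : Finset E), G.IsSpanningTreeOn (H1 ∪ {star}) a₁ N →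
          G.IsSpanningTreeOn (H2 ∪ {star}) a₂ star →
          G.IsSpanningTreeOn (H1 ∪ {star}) b₁ N →
          G.IsSpanningTreeOn (H2 ∪ {star}) b₂ star →
          a₁ ∪ a₂ = b₁ ∪ b₂ → a₂ ⊆ b₂ := by
        intro a₁ a₂ b₁ b₂ ha1 ha2 hb1 hb2 h e he
        have : e ∈ b₁ ∪ b₂ := h ▸ Finset.mem_union_right _ he
        rcases Finset.mem_union.mp this with hf | hf
        · exact absurd (hsrc2 a₂ ha2 e he) (hW1H2 _ (hb1.1 e hf).1)
        · exact hf
      exact le_antisymm (key2 τ₁ τ₂ σ₁ σ₂ h1 h2 g1 g2 hu)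
        (key2 σ₁ σ₂ τ₁ τ₂ g1 g2 h1 h2 hu.symm)
    exact Prod.ext e1 e2
  · -- SurjOn
    rintro τ hτ
    obtain ⟨hW, hu, hr, hreach⟩ := hτ
    set τ₁ : Finset E := τ.filter (fun e => G.src e ∈ H1 ∪ {star}) with hτ₁
    set τ₂ : Finset E := τ.filter (fun e => G.src e ∈ H2) with hτ₂
    have hstar_edge : ∀ e ∈ τ, G.src e = star → G.tgt e ∈ H1 := by
      intro e he hse
      by_contra htg
      have hNstar : N ≠ star := fun h => hr e he (h ▸ hse)
      have hN1 : N ∈ H1 := by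
        rcases hN with h | h
        · exact h
        · exact absurd (Set.mem_singleton_iff.mp h) hNstar
      -- S = H2 ∪ {star} is closed under τ-steps
      have htgtS : G.tgt e ∈ H2 ∪ {star} := by
        rcases hcov (G.tgt e) with h | h | h
        · exact absurd h htg
        · exact Or.inl h
        · exact Or.inr h
      have hclosed : ∀ a b, a ∈ H2 ∪ {star} → G.Rel (τ : Set E) a b → b ∈ H2 ∪ {star} := by
        rintro a b ha ⟨f, hf, hsf, htf⟩
        rcases ha with ha | ha
        · rcases hcov b with hb | hb | hb
          · exact absurd ⟨hsf ▸ ha, htf ▸ hb⟩ (hsep f).2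
          · exact Or.inl hb
          · exact Or.inr hb
        · -- a = star, so f = e by uniqueness
          rw [Set.mem_singleton_iff] at ha
          obtain ⟨g, _, hug⟩ := hu star (Set.mem_univ star) (Ne.symm hNstar)
          have hfe : f = e := by
            rw [hug f ⟨Finset.mem_coe.mp hf, hsf.trans ha⟩, hug e ⟨he, hse⟩]
          exact htf ▸ hfe ▸ htgtS
      have : N ∈ H2 ∪ {star} :=
        closed_reach G hclosed (Or.inr rfl) (hreach star (Set.mem_univ star))
      rcases this with h | h
      · exact hNH2 h
      · exact hNstar (Set.mem_singleton_iff.mp h)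
    have hins1 : ∀ e ∈ τ₁, G.src e ∈ H1 ∪ {star} ∧ G.tgt e ∈ H1 ∪ {star} := by
      intro e he
      rw [hτ₁, Finset.mem_filter] at he
      obtain ⟨heτ, hs⟩ := he
      refine ⟨hs, ?_⟩
      rcases hs with hs | hs
      · rcases hcov (G.tgt e) with h | h | h
        · exact Or.inl h
        · exact absurd ⟨hs, h⟩ (hsep e).1
        · exact Or.inr h
      · exact Or.inl (hstar_edge e heτ (Set.mem_singleton_iff.mp hs))
    have hins2 : ∀ e ∈ τ₂, G.src e ∈ H2 ∪ {star} ∧ G.tgt e ∈ H2 ∪ {star} := by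
      intro e he
      rw [hτ₂, Finset.mem_filter] at he
      obtain ⟨heτ, hs⟩ := he
      refine ⟨Or.inl hs, ?_⟩
      rcases hcov (G.tgt e) with h | h | h
      · exact absurd ⟨hs, h⟩ (hsep e).2
      · exact Or.inl h
      · exact Or.inr h
    have hunion : τ₁ ∪ τ₂ = τ := by
      ext e
      rw [Finset.mem_union, hτ₁, hτ₂, Finset.mem_filter, Finset.mem_filter]
      constructor
      · rintro (⟨h, _⟩ | ⟨h, _⟩) <;> exact h
      · intro h
        rcases hcov (G.src e) with hs | hs | hs
        · exact Or.inl ⟨h, Or.inl hs⟩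
        · exact Or.inr ⟨h, hs⟩
        · exact Or.inl ⟨h, Or.inr hs⟩
    have ht1 : G.IsSpanningTreeOn (H1 ∪ {star}) τ₁ N := by
      refine ⟨hins1, ?_, ?_, ?_⟩
      · intro v hv hvN
        obtain ⟨e, ⟨he, hse⟩, hue⟩ := hu v (Set.mem_univ v) hvN
        refine ⟨e, ⟨by rw [hτ₁, Finset.mem_filter]; exact ⟨he, hse ▸ hv⟩, hse⟩, ?_⟩
        rintro f ⟨hf, hsf⟩
        rw [hτ₁, Finset.mem_filter] at hf
        exact hue f ⟨hf.1, hsf⟩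
      · intro e he
        rw [hτ₁, Finset.mem_filter] at he
        exact hr e he.1
      · intro v hv
        refine reach_transfer G (τ := (τ : Set E)) (S := H1 ∪ {star}) ?_ hv
          (hreach v (Set.mem_univ v))
        rintro a b ha ⟨e, he, hse, hte⟩
        have he1 : e ∈ τ₁ := by
          rw [hτ₁, Finset.mem_filter]; exact ⟨Finset.mem_coe.mp he, hse ▸ ha⟩
        exact ⟨⟨e, Finset.mem_coe.mpr he1, hse, hte⟩, hte ▸ (hins1 e he1).2⟩
    have ht2 : G.IsSpanningTreeOn (H2 ∪ {star}) τ₂ star := by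
      refine ⟨hins2, ?_, ?_, ?_⟩
      · intro v hv hvs
        have hv2 : v ∈ H2 := by
          rcases hv with h | h
          · exact h
          · exact absurd (Set.mem_singleton_iff.mp h) hvs
        have hvN : v ≠ N := fun h => hNH2 (h ▸ hv2)
        obtain ⟨e, ⟨he, hse⟩, hue⟩ := hu v (Set.mem_univ v) hvN
        refine ⟨e, ⟨by rw [hτ₂, Finset.mem_filter]; exact ⟨he, hse ▸ hv2⟩, hse⟩, ?_⟩
        rintro f ⟨hf, hsf⟩
        rw [hτ₂, Finset.mem_filter] at hf
        exact hue f ⟨hf.1, hsf⟩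
      · intro e he
        rw [hτ₂, Finset.mem_filter] at he
        exact fun h => hstar2 (h ▸ he.2)
      · intro v hv
        rcases hv with hv | hv
        · refine reach_exit G (H := H2) (N := N) (star := star) hNH2 ?_ hv
            (hreach v (Set.mem_univ v))
          intro e he hse
          have he2 : e ∈ τ₂ := by rw [hτ₂, Finset.mem_filter]; exact ⟨Finset.mem_coe.mp he, hse⟩
          refine ⟨Finset.mem_coe.mpr he2, ?_⟩
          rcases (hins2 e he2).2 with h | h
          · exact Or.inl h
          · exact Or.inr (Set.mem_singleton_iff.mp h)
        · exact Set.mem_singleton_iff.mp hv ▸ Relation.ReflTransGen.refl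
    exact ⟨(τ₁, τ₂), ⟨ht1, ht2⟩, hunion⟩
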